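/- Let $J: X \to [0, \infty)$ be bounded measurable with $\bar J := \sup_X J$, and let $(\tilde Z_k)_{k \geq 0}$ be any sequence of $X$-valued random variables. Define, for $\varepsilon > 0$, $\nu_\varepsilon(\sigma = k) = \mathbf{E}\big[e^{-\sqrt{\varepsilon}(J(\tilde Z_0) + \cdots + J(\tilde Z_{k-1}))}(1 - e^{-\sqrt{\varepsilon} J(\tilde Z_k)})\big]$. Then for every $k_0 \geq 1$, every $\eta > 0$, and every $a > 0$: if $\mathbf{P}\big(\big|\frac{1}{k}\sum_{j=0}^{k-1} J(\tilde Z_j) - J_\varepsilon\big| \geq \eta\big) \leq \eta$ for all $k \geq k_0$ (where $J_\varepsilon > 0$), then $\sum_{k = k_0}^{[a/\sqrt{\varepsilon}]} \nu_\varepsilon(\sigma = k) \leq \eta + (1 - e^{-\sqrt{\varepsilon}\, \bar J}) \sum_{k=k_0}^{[a/\sqrt{\varepsilon}]} e^{-\sqrt{\varepsilon}\, k (J_\varepsilon - \eta)}$. -/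

import Mathlib

open MeasureTheory

private lemma tele_sum (u : ℕ → ℝ) (a b : ℕ) (hab : a ≤ b) :
    ∑ k ∈ Finset.Icc a b, (u k - u (k + 1)) = u a - u (b + 1) := by
  rw [← Finset.Ico_add_one_right_eq_Icc, Finset.sum_Ico_eq_sum_range]
  have h := Finset.sum_range_sub' (fun j => u (a + j)) (b + 1 - a)
  have h2 : ∀ i, u (a + i) - u (a + i + 1)
      = (fun j => u (a + j)) i - (fun j => u (a + j)) (i + 1) := by
    intro i; simp [Nat.add_assoc]
  calc ∑ i ∈ Finset.range (b + 1 - a), (u (a + i) - u (a + i + 1))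
      = ∑ i ∈ Finset.range (b + 1 - a),
          ((fun j => u (a + j)) i - (fun j => u (a + j)) (i + 1)) := by
        exact Finset.sum_congr rfl fun i _ => h2 i
    _ = (fun j => u (a + j)) 0 - (fun j => u (a + j)) (b + 1 - a) := h
    _ = u a - u (b + 1) := by
        have : a + (b + 1 - a) = b + 1 := Nat.add_sub_cancel' (Nat.le_succ_of_le hab)
        simp [this]

set_option maxHeartbeats 1000000 in
/-- Key estimate for the killing time `σ` of a chain killed at rate `1 - e^{-√ε J(·)}`
per step: if the empirical averages of `J` concentrate near `J_ε`, then
`∑_{k=k₀}^{[a/√ε]} ν_ε(σ = k) ≤ η + (1 - e^{-√ε J̄}) ∑_{k=k₀}^{[a/√ε]} e^{-√ε k (J_ε - η)}`. -/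
theorem killing_time_lower_tail_estimate
    {X : Type} {Ω : Type} [MeasurableSpace Ω] (μ : Measure Ω) [IsProbabilityMeasure μ]
    (J : X → ℝ) (Jbar : ℝ) (hJ0 : ∀ x, 0 ≤ J x) (hJb : ∀ x, J x ≤ Jbar)
    (Z : ℕ → Ω → X) (ε : ℝ) (hε : 0 < ε)
    (Jeps η : ℝ) (hJeps : 0 < Jeps) (hη : 0 < η)
    (k0 : ℕ) (hk0 : 1 ≤ k0) (a : ℝ) (ha : 0 < a)
    (hLLN : ∀ k ≥ k0,
      (μ {ω | η ≤ |(1 / (k : ℝ)) * ∑ j ∈ Finset.range k, J (Z j ω) - Jeps|}).toReal ≤ η) :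
    (∑ k ∈ Finset.Icc k0 ⌊a / Real.sqrt ε⌋₊,
        ∫ ω, Real.exp (-(Real.sqrt ε * ∑ j ∈ Finset.range k, J (Z j ω))) *
          (1 - Real.exp (-(Real.sqrt ε * J (Z k ω)))) ∂μ)
      ≤ η + (1 - Real.exp (-(Real.sqrt ε * Jbar))) *
          ∑ k ∈ Finset.Icc k0 ⌊a / Real.sqrt ε⌋₊,
            Real.exp (-(Real.sqrt ε * k * (Jeps - η))) := by
  classical
  have hΩ : Nonempty Ω := by
    by_contra h
    have h0 : (Set.univ : Set Ω) = ∅ := Set.univ_eq_empty_iff.mpr (not_nonempty_iff.mp h)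
    have h1 : μ Set.univ = 1 := measure_univ
    rw [h0, measure_empty] at h1
    exact zero_ne_one h1
  obtain ⟨ω0⟩ := hΩ
  have hJbar : 0 ≤ Jbar := le_trans (hJ0 (Z 0 ω0)) (hJb _)
  set s := Real.sqrt ε with hsdef
  have hs : 0 < s := Real.sqrt_pos.mpr hε
  set N := ⌊a / s⌋₊ with hN
  set f : ℕ → Ω → ℝ := fun k ω => Real.exp (-(s * ∑ j ∈ Finset.range k, J (Z j ω))) with hf
  set e : ℕ → ℝ := fun k => Real.exp (-(s * (k : ℝ) * (Jeps - η))) with he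
  set q : ℝ := Real.exp (-(s * Jbar)) with hq
  have hq0 : 0 < q := Real.exp_pos _
  have hq1 : q ≤ 1 := Real.exp_le_one_iff.mpr (by nlinarith)
  -- basic facts about f
  have hfpos : ∀ k ω, 0 < f k ω := fun k ω => Real.exp_pos _
  have hfle1 : ∀ k ω, f k ω ≤ 1 := by
    intro k ω
    apply Real.exp_le_one_iff.mpr
    have : 0 ≤ ∑ j ∈ Finset.range k, J (Z j ω) :=
      Finset.sum_nonneg fun j _ => hJ0 _
    nlinarith
  have hfsucc : ∀ k ω, f (k + 1) ω = f k ω * Real.exp (-(s * J (Z k ω))) := by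
    intro k ω
    simp only [hf]
    rw [← Real.exp_add, Finset.sum_range_succ]
    ring_nf
  have hqF : ∀ k ω, q * f k ω ≤ f (k + 1) ω := by
    intro k ω
    rw [hfsucc k ω, mul_comm]
    apply mul_le_mul_of_nonneg_left _ (hfpos k ω).le
    exact Real.exp_le_exp.mpr (by nlinarith [hJb (Z k ω)])
  have hfmono : ∀ k ω, f (k + 1) ω ≤ f k ω := by
    intro k ω
    rw [hfsucc k ω]
    have h1 : Real.exp (-(s * J (Z k ω))) ≤ 1 :=
      Real.exp_le_one_iff.mpr (by nlinarith [hJ0 (Z k ω)])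
    nlinarith [hfpos k ω]
  -- nonnegativity of the integrand
  have hDnn : ∀ k ω, 0 ≤ f k ω * (1 - Real.exp (-(s * J (Z k ω)))) := by
    intro k ω
    apply mul_nonneg (hfpos k ω).le
    have : Real.exp (-(s * J (Z k ω))) ≤ 1 :=
      Real.exp_le_one_iff.mpr (by nlinarith [hJ0 (Z k ω)])
    linarith
  have hDeq : ∀ k ω, f k ω * (1 - Real.exp (-(s * J (Z k ω)))) = f k ω - f (k + 1) ω := by
    intro k ω
    rw [hfsucc k ω]; ring
  -- the LLN events and their measurable hulls
  set A : ℕ → Set Ω :=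
    fun k => {ω | η ≤ |(1 / (k : ℝ)) * ∑ j ∈ Finset.range k, J (Z j ω) - Jeps|} with hA
  set C : ℕ → Set Ω := fun k => toMeasurable μ (A k) with hC
  have hCmeas : ∀ k, MeasurableSet (C k) := fun k => measurableSet_toMeasurable _ _
  have hCμ : ∀ k, k0 ≤ k → (μ (C k)).toReal ≤ η := by
    intro k hk
    rw [hC]
    simp only [measure_toMeasurable]
    exact hLLN k hk
  have hmem : ∀ k, k0 ≤ k → ∀ ω, e k < f k ω → ω ∈ C k := by
    intro k hk ω hlt
    apply subset_toMeasurable μ (A k)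
    have hk1 : (1 : ℝ) ≤ (k : ℝ) := by exact_mod_cast le_trans hk0 hk
    have hkpos : (0 : ℝ) < (k : ℝ) := by linarith
    have h1 : -(s * (k : ℝ) * (Jeps - η)) < -(s * ∑ j ∈ Finset.range k, J (Z j ω)) :=
      Real.exp_lt_exp.mp hlt
    have h2 : ∑ j ∈ Finset.range k, J (Z j ω) < (k : ℝ) * (Jeps - η) := by
      have := neg_lt_neg_iff.mp h1
      nlinarith
    have h3 : (1 / (k : ℝ)) * ∑ j ∈ Finset.range k, J (Z j ω) - Jeps < -η := by
      rw [div_mul_eq_mul_div, one_mul, sub_lt_iff_lt_add, div_lt_iff₀ hkpos]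
      nlinarith
    show η ≤ |(1 / (k : ℝ)) * ∑ j ∈ Finset.range k, J (Z j ω) - Jeps|
    exact le_abs.mpr (Or.inr (by linarith))
  -- restate the goal in terms of the abbreviations
  show (∑ k ∈ Finset.Icc k0 N,
      ∫ ω, f k ω * (1 - Real.exp (-(s * J (Z k ω)))) ∂μ)
    ≤ η + (1 - q) * ∑ k ∈ Finset.Icc k0 N, e k
  -- trivial case: empty interval
  rcases lt_or_ge N k0 with hNk | hNk
  · rw [Finset.Icc_eq_empty (by omega)]
    simp only [Finset.sum_empty, mul_zero, add_zero]
    linarith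
  -- easy case : Jeps ≤ η
  rcases le_or_gt Jeps η with hcase | hcase
  · have hek1 : ∀ k : ℕ, (1 : ℝ) ≤ e k := by
      intro k
      have hk' : (0 : ℝ) ≤ (k : ℝ) := Nat.cast_nonneg k
      exact Real.one_le_exp_iff.mpr (by nlinarith [mul_nonneg (mul_nonneg hs.le hk') (sub_nonneg.mpr hcase)])
    have hbound : ∀ k ∈ Finset.Icc k0 N,
        (∫ ω, f k ω * (1 - Real.exp (-(s * J (Z k ω)))) ∂μ) ≤ (1 - q) * e k := by
      intro k _
      have hle : ∀ ω, f k ω * (1 - Real.exp (-(s * J (Z k ω)))) ≤ (1 - q) * e k := by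
        intro ω
        have h1 : q ≤ Real.exp (-(s * J (Z k ω))) :=
          Real.exp_le_exp.mpr (by nlinarith [hJb (Z k ω)])
        have h2 : Real.exp (-(s * J (Z k ω))) ≤ 1 :=
          Real.exp_le_one_iff.mpr (by nlinarith [hJ0 (Z k ω)])
        have h3 := hfle1 k ω
        have h4 := (hfpos k ω).le
        have h5 := hek1 k
        nlinarith
      calc (∫ ω, f k ω * (1 - Real.exp (-(s * J (Z k ω)))) ∂μ)
          ≤ ∫ _ω, (1 - q) * e k ∂μ :=
            integral_mono_of_nonneg (Filter.Eventually.of_forall (hDnn k))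
              (integrable_const _) (Filter.Eventually.of_forall hle)
        _ = (1 - q) * e k := by simp
    calc (∑ k ∈ Finset.Icc k0 N, ∫ ω, f k ω * (1 - Real.exp (-(s * J (Z k ω)))) ∂μ)
        ≤ ∑ k ∈ Finset.Icc k0 N, (1 - q) * e k := Finset.sum_le_sum hbound
      _ = (1 - q) * ∑ k ∈ Finset.Icc k0 N, e k := (Finset.mul_sum _ _ _).symm
      _ ≤ η + (1 - q) * ∑ k ∈ Finset.Icc k0 N, e k := by linarith
  -- main case : η < Jeps
  · have hd : 0 < Jeps - η := by linarith
    have hepos : ∀ k : ℕ, 0 < e k := fun k => Real.exp_pos _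
    have he1 : ∀ k : ℕ, e k ≤ 1 := by
      intro k
      have hk' : (0 : ℝ) ≤ (k : ℝ) := Nat.cast_nonneg k
      exact Real.exp_le_one_iff.mpr (by nlinarith [mul_nonneg (mul_nonneg hs.le hk') hd.le])
    have hemono : ∀ k : ℕ, e (k + 1) ≤ e k := by
      intro k
      have hk' : (0 : ℝ) ≤ (k : ℝ) := Nat.cast_nonneg k
      apply Real.exp_le_exp.mpr
      push_cast
      nlinarith
    set ind : ℕ → Ω → ℝ := fun k => (C k).indicator (fun _ => (1 : ℝ)) with hind
    have hindint : ∀ k, Integrable (ind k) μ := fun k =>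
      (integrable_const (1 : ℝ)).indicator (hCmeas k)
    have hindnn : ∀ k ω, 0 ≤ ind k ω := fun k ω =>
      Set.indicator_nonneg (fun _ _ => zero_le_one) ω
    -- the key pointwise estimate
    have hkey : ∀ k, k0 ≤ k → ∀ ω,
        f k ω * (1 - Real.exp (-(s * J (Z k ω)))) ≤
          (max (f k ω - e k) 0 - max (f (k + 1) ω - e (k + 1)) 0)
          + ((1 - q) * e k + (e k - e (k + 1)) * ind (k + 1) ω) := by
      intro k hkk ω
      have hEpos := hepos k
      have hE'pos := hepos (k + 1)
      have hEE' := hemono k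
      have hsplitF : f k ω = max (f k ω - e k) 0 + min (f k ω) (e k) := by
        rcases le_total (f k ω) (e k) with h | h
        · rw [max_eq_right (by linarith), min_eq_left h]; ring
        · rw [max_eq_left (by linarith), min_eq_right h]; ring
      have hsplitF' : f (k + 1) ω
          = max (f (k + 1) ω - e (k + 1)) 0 + min (f (k + 1) ω) (e (k + 1)) := by
        rcases le_total (f (k + 1) ω) (e (k + 1)) with h | h
        · rw [max_eq_right (by linarith), min_eq_left h]; ring
        · rw [max_eq_left (by linarith), min_eq_right h]; ring
      have hmin1 : min (f k ω) (e k) - min (f (k + 1) ω) (e k) ≤ (1 - q) * e k := by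
        have h1 : q * min (f k ω) (e k) ≤ min (f (k + 1) ω) (e k) := by
          apply le_min
          · calc q * min (f k ω) (e k) ≤ q * f k ω :=
                  mul_le_mul_of_nonneg_left (min_le_left _ _) hq0.le
              _ ≤ f (k + 1) ω := hqF k ω
          · calc q * min (f k ω) (e k) ≤ q * e k :=
                  mul_le_mul_of_nonneg_left (min_le_right _ _) hq0.le
              _ ≤ e k := by nlinarith
        have h2 : min (f k ω) (e k) ≤ e k := min_le_right _ _
        have h3 : 0 ≤ min (f k ω) (e k) := le_min (hfpos k ω).le hEpos.le
        nlinarith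
      have hmin2 : min (f (k + 1) ω) (e k) - min (f (k + 1) ω) (e (k + 1))
          ≤ (e k - e (k + 1)) * ind (k + 1) ω := by
        rcases le_or_gt (f (k + 1) ω) (e (k + 1)) with h | h
        · rw [min_eq_left (h.trans hEE'), min_eq_left h]
          have := hindnn (k + 1) ω
          nlinarith
        · have hω : ω ∈ C (k + 1) := hmem (k + 1) (le_trans hkk (Nat.le_succ k)) ω h
          have hi : ind (k + 1) ω = 1 := by
            simp only [hind]; rw [Set.indicator_of_mem hω]
          rw [hi, mul_one, min_eq_right h.le]
          have := min_le_right (f (k + 1) ω) (e k)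
          linarith
      rw [hDeq k ω]
      linarith
    -- the integrable dominating function
    set T : Finset ℕ := (Finset.Icc k0 N).filter
      (fun k => Integrable (fun ω => f k ω * (1 - Real.exp (-(s * J (Z k ω))))) μ) with hT
    set Psi : Ω → ℝ := fun ω => (1 - e k0) * ind k0 ω
      + ∑ k ∈ Finset.Icc k0 N, ((1 - q) * e k + (e k - e (k + 1)) * ind (k + 1) ω) with hPsi
    have hsumint : Integrable (fun ω => ∑ k ∈ Finset.Icc k0 N,
        ((1 - q) * e k + (e k - e (k + 1)) * ind (k + 1) ω)) μ :=
      integrable_finset_sum _ fun k _ =>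
        (integrable_const _).add ((hindint (k + 1)).const_mul _)
    have hPsiint : Integrable Psi μ := ((hindint k0).const_mul _).add hsumint
    have hPsile : ∀ ω, (∑ k ∈ T, f k ω * (1 - Real.exp (-(s * J (Z k ω))))) ≤ Psi ω := by
      intro ω
      have h1 : ∑ k ∈ T, f k ω * (1 - Real.exp (-(s * J (Z k ω))))
          ≤ ∑ k ∈ Finset.Icc k0 N, f k ω * (1 - Real.exp (-(s * J (Z k ω)))) :=
        Finset.sum_le_sum_of_subset_of_nonneg (Finset.filter_subset _ _)
          (fun k _ _ => hDnn k ω)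
      have h2 : ∑ k ∈ Finset.Icc k0 N, f k ω * (1 - Real.exp (-(s * J (Z k ω))))
          ≤ ∑ k ∈ Finset.Icc k0 N, ((max (f k ω - e k) 0 - max (f (k + 1) ω - e (k + 1)) 0)
              + ((1 - q) * e k + (e k - e (k + 1)) * ind (k + 1) ω)) :=
        Finset.sum_le_sum fun k hk => hkey k (Finset.mem_Icc.mp hk).1 ω
      rw [Finset.sum_add_distrib] at h2
      have h3 : ∑ k ∈ Finset.Icc k0 N,
          (max (f k ω - e k) 0 - max (f (k + 1) ω - e (k + 1)) 0)
          = max (f k0 ω - e k0) 0 - max (f (N + 1) ω - e (N + 1)) 0 :=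
        tele_sum (fun k => max (f k ω - e k) 0) k0 N hNk
      have h4 : max (f k0 ω - e k0) 0 ≤ (1 - e k0) * ind k0 ω := by
        rcases le_or_gt (f k0 ω) (e k0) with h | h
        · rw [max_eq_right (by linarith)]
          exact mul_nonneg (by linarith [he1 k0]) (hindnn k0 ω)
        · have hω : ω ∈ C k0 := hmem k0 le_rfl ω h
          have hi : ind k0 ω = 1 := by
            simp only [hind]; rw [Set.indicator_of_mem hω]
          rw [hi, mul_one]
          exact max_le (by linarith [hfle1 k0 ω]) (by linarith [he1 k0])
      have h5 : (0 : ℝ) ≤ max (f (N + 1) ω - e (N + 1)) 0 := le_max_right _ _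
      simp only [hPsi]
      linarith
    -- put everything together
    have hLHS : (∑ k ∈ Finset.Icc k0 N, ∫ ω, f k ω * (1 - Real.exp (-(s * J (Z k ω)))) ∂μ)
        = ∑ k ∈ T, ∫ ω, f k ω * (1 - Real.exp (-(s * J (Z k ω)))) ∂μ := by
      apply (Finset.sum_subset (Finset.filter_subset _ _) _).symm
      intro k hk hkT
      apply integral_undef
      simp only [hT, Finset.mem_filter, hk, true_and] at hkT
      exact hkT
    have hTint : ∀ k ∈ T, Integrable
        (fun ω => f k ω * (1 - Real.exp (-(s * J (Z k ω))))) μ :=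
      fun k hk => (Finset.mem_filter.mp hk).2
    have hstep : ∑ k ∈ T, ∫ ω, f k ω * (1 - Real.exp (-(s * J (Z k ω)))) ∂μ
        = ∫ ω, ∑ k ∈ T, f k ω * (1 - Real.exp (-(s * J (Z k ω)))) ∂μ :=
      (integral_finset_sum T hTint).symm
    have hmono : (∫ ω, ∑ k ∈ T, f k ω * (1 - Real.exp (-(s * J (Z k ω)))) ∂μ)
        ≤ ∫ ω, Psi ω ∂μ :=
      integral_mono_of_nonneg
        (Filter.Eventually.of_forall fun ω => Finset.sum_nonneg fun k _ => hDnn k ω)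
        hPsiint (Filter.Eventually.of_forall hPsile)
    have hindval : ∀ k, (∫ ω, ind k ω ∂μ) = (μ (C k)).toReal := by
      intro k
      simp only [hind]
      rw [integral_indicator_const (1 : ℝ) (hCmeas k)]
      simp
      rfl
    have hPsival : (∫ ω, Psi ω ∂μ) = (1 - e k0) * (μ (C k0)).toReal
        + ∑ k ∈ Finset.Icc k0 N, ((1 - q) * e k
            + (e k - e (k + 1)) * (μ (C (k + 1))).toReal) := by
      have hterm : ∀ k : ℕ, (∫ ω, ((1 - q) * e k + (e k - e (k + 1)) * ind (k + 1) ω) ∂μ)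
          = (1 - q) * e k + (e k - e (k + 1)) * (μ (C (k + 1))).toReal := by
        intro k
        have h3 : (∫ ω, (e k - e (k + 1)) * ind (k + 1) ω ∂μ)
            = (e k - e (k + 1)) * (μ (C (k + 1))).toReal := by
          rw [integral_const_mul _ _, hindval (k + 1)]
        rw [integral_add (integrable_const _) ((hindint (k + 1)).const_mul _),
          h3, integral_const]
        simp
      have h1 : (∫ ω, Psi ω ∂μ) = (∫ ω, (1 - e k0) * ind k0 ω ∂μ)
          + ∫ ω, (∑ k ∈ Finset.Icc k0 N,
              ((1 - q) * e k + (e k - e (k + 1)) * ind (k + 1) ω)) ∂μ :=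
        integral_add ((hindint k0).const_mul _) hsumint
      have h2 : (∫ ω, (∑ k ∈ Finset.Icc k0 N,
              ((1 - q) * e k + (e k - e (k + 1)) * ind (k + 1) ω)) ∂μ)
          = ∑ k ∈ Finset.Icc k0 N,
              ∫ ω, ((1 - q) * e k + (e k - e (k + 1)) * ind (k + 1) ω) ∂μ :=
        integral_finset_sum _ fun k _ =>
          (integrable_const _).add ((hindint (k + 1)).const_mul _)
      rw [h1, h2, integral_const_mul _ _, hindval k0]
      exact congrArg _ (Finset.sum_congr rfl fun k _ => hterm k)
    have hfinal : (1 - e k0) * (μ (C k0)).toReal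
        + (∑ k ∈ Finset.Icc k0 N, ((1 - q) * e k
            + (e k - e (k + 1)) * (μ (C (k + 1))).toReal))
        ≤ η + (1 - q) * ∑ k ∈ Finset.Icc k0 N, e k := by
      have hb1 : (1 - e k0) * (μ (C k0)).toReal ≤ (1 - e k0) * η :=
        mul_le_mul_of_nonneg_left (hCμ k0 le_rfl) (by linarith [he1 k0])
      have hb2 : ∑ k ∈ Finset.Icc k0 N, (e k - e (k + 1)) * (μ (C (k + 1))).toReal
          ≤ ∑ k ∈ Finset.Icc k0 N, (e k - e (k + 1)) * η := by
        apply Finset.sum_le_sum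
        intro k hk
        exact mul_le_mul_of_nonneg_left
          (hCμ (k + 1) (le_trans (Finset.mem_Icc.mp hk).1 (Nat.le_succ k)))
          (by linarith [hemono k])
      have hb3 : ∑ k ∈ Finset.Icc k0 N, ((e k - e (k + 1)) * η)
          = (e k0 - e (N + 1)) * η := by
        rw [← Finset.sum_mul, tele_sum e k0 N hNk]
      rw [Finset.sum_add_distrib, ← Finset.mul_sum]
      have hb4 := hepos (N + 1)
      have hb5 := he1 k0
      nlinarith [hb2.trans_eq hb3]
    calc (∑ k ∈ Finset.Icc k0 N, ∫ ω, f k ω * (1 - Real.exp (-(s * J (Z k ω)))) ∂μ)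
        = ∫ ω, ∑ k ∈ T, f k ω * (1 - Real.exp (-(s * J (Z k ω)))) ∂μ := by
          rw [hLHS, hstep]
      _ ≤ ∫ ω, Psi ω ∂μ := hmono
      _ = _ := hPsival
      _ ≤ η + (1 - q) * ∑ k ∈ Finset.Icc k0 N, e k := hfinal
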